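/- Fix D ≥ 0 and ε, δ ∈ [0,1), and assume G^δ_{D,ε}(X) < +∞. Then G^δ_{D,ε}(X) − 1 < R̃(D, ε, δ) ≤ ⌊G^δ_{D,ε}(X) + (2 log₂ e) / 2^{G^δ_{D,ε}(X)}⌋. -/

import Mathlib

open scoped ENNReal
open MeasureTheory

noncomputable section

/-- The smooth max entropy `H^δ(P)` (base 2) of a probability distribution `P`
on a finite alphabet `𝒴`: the least `log₂ |𝒲|` over subsets `𝒲 ⊆ 𝒴` of
probability at least `1 - δ`. -/
def smoothMaxEnt {𝒴 : Type} [Fintype 𝒴] (P : 𝒴 → ℝ≥0∞) (δ : ℝ) : ℝ :=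
  sInf {r : ℝ | ∃ W : Finset 𝒴,
    ENNReal.ofReal (1 - δ) ≤ ∑ y ∈ W, P y ∧ r = Real.logb 2 (W.card)}

/-- A channel (conditional probability distribution) from `𝒳` to `𝒴`. -/
def IsChannel {𝒳 𝒴 : Type} [Fintype 𝒴] (W : 𝒳 → 𝒴 → ℝ≥0∞) : Prop :=
  ∀ x, ∑ y, W x y = 1

/-- The output marginal distribution of the channel `W` with input distribution `pX`. -/
def marginal {𝒳 𝒴 : Type} [Fintype 𝒳] (pX : 𝒳 → ℝ≥0∞) (W : 𝒳 → 𝒴 → ℝ≥0∞) : 𝒴 → ℝ≥0∞ :=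
  fun y => ∑ x, pX x * W x y

/-- `Pr{d(X,Y) > D}` for the joint law `pX · W`. -/
def chExcess {𝒳 𝒴 : Type} [Fintype 𝒳] [Fintype 𝒴] (pX : 𝒳 → ℝ≥0∞) (W : 𝒳 → 𝒴 → ℝ≥0∞)
    (d : 𝒳 → 𝒴 → ℝ) (D : ℝ) : ℝ≥0∞ :=
  ∑ x, ∑ y, if D < d x y then pX x * W x y else 0

/-- The quantity `G^δ_{D,ε}(X)` as a value in `[0,∞]`: the infimum of the smooth max
entropy of the output marginal, over channels whose excess-distortion probability is
at most `ε`; it equals `+∞` if no such channel exists. -/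
def Gq {𝒳 𝒴 : Type} [Fintype 𝒳] [Fintype 𝒴] (pX : 𝒳 → ℝ≥0∞) (d : 𝒳 → 𝒴 → ℝ)
    (D ε δ : ℝ) : ℝ≥0∞ :=
  ⨅ (W : 𝒳 → 𝒴 → ℝ≥0∞) (_ : IsChannel W) (_ : chExcess pX W d D ≤ ENNReal.ofReal ε),
    ENNReal.ofReal (smoothMaxEnt (marginal pX W) δ)

/-- `(f, g)` is a `(D, R, ε, δ)` code: `f` is a (possibly stochastic) encoder assigning
to each source symbol a probability distribution on binary strings (`List Bool`),
`g` is a decoder, the excess distortion probability is at most `ε`, and the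
overflow probability is at most `δ`. -/
def IsCode {𝒳 𝒴 : Type} [Fintype 𝒳] (pX : 𝒳 → ℝ≥0∞) (d : 𝒳 → 𝒴 → ℝ)
    (D R ε δ : ℝ) (f : 𝒳 → List Bool → ℝ≥0∞) (g : List Bool → 𝒴) : Prop :=
  (∀ x, ∑' w : List Bool, f x w = 1) ∧
  (∑ x, ∑' w : List Bool, (if D < d x (g w) then pX x * f x w else 0))
      ≤ ENNReal.ofReal ε ∧
  (∑ x, ∑' w : List Bool, (if R < (w.length : ℝ) then pX x * f x w else 0))
      ≤ ENNReal.ofReal δ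

/-- The deterministic encoder `f : 𝒳 → {0,1}*` viewed as a stochastic encoder. -/
def detEnc {𝒳 : Type} (f : 𝒳 → List Bool) : 𝒳 → List Bool → ℝ≥0∞ :=
  fun x w => if w = f x then 1 else 0

/-- The sum of the `j` largest values of `P`. -/
def topSum {𝒴 : Type} [Fintype 𝒴] (P : 𝒴 → ℝ≥0∞) (j : ℕ) : ℝ≥0∞ :=
  ⨆ (W : Finset 𝒴) (_ : W.card ≤ j), ∑ y ∈ W, P y


/-- Finset of boolean strings of length exactly `k`. -/
def lenL : ℕ → Finset (List Bool)
  | 0 => {[]}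
  | (k+1) => ((lenL k).image (List.cons true)) ∪ ((lenL k).image (List.cons false))

lemma mem_lenL {w : List Bool} {k : ℕ} : w ∈ lenL k ↔ w.length = k := by
  induction k generalizing w with
  | zero => cases w <;> simp [lenL]
  | succ k ih =>
    cases w with
    | nil => simp [lenL]
    | cons b t =>
      cases b <;> simp [lenL, ih]

lemma card_lenL (k : ℕ) : (lenL k).card = 2 ^ k := by
  induction k with
  | zero => simp [lenL]
  | succ k ih =>
    rw [lenL, Finset.card_union_of_disjoint, Finset.card_image_of_injective _ (by
      intro a b h; simpa using h), Finset.card_image_of_injective _ (by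
      intro a b h; simpa using h), ih]
    · ring
    · rw [Finset.disjoint_left]
      rintro a ha hb
      simp only [Finset.mem_image] at ha hb
      obtain ⟨x, _, rfl⟩ := ha
      obtain ⟨y, _, h⟩ := hb
      simp at h

/-- Finset of boolean strings of length at most `n`. -/
def strS (n : ℕ) : Finset (List Bool) := (Finset.range (n+1)).biUnion lenL

lemma mem_strS {w : List Bool} {n : ℕ} : w ∈ strS n ↔ w.length ≤ n := by
  simp only [strS, Finset.mem_biUnion, Finset.mem_range, mem_lenL]
  constructor
  · rintro ⟨k, hk, rfl⟩; omega
  · intro h; exact ⟨w.length, by omega, rfl⟩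

lemma card_strS (n : ℕ) : (strS n).card = 2 ^ (n+1) - 1 := by
  rw [strS, Finset.card_biUnion]
  · induction n with
    | zero => simp [card_lenL]
    | succ n ih =>
      rw [Finset.sum_range_succ, ih, card_lenL]
      have : 1 ≤ 2 ^ (n+1) := Nat.one_le_two_pow
      ring_nf
      omega
  · intro a _ b _ hab
    change Disjoint (lenL a) (lenL b)
    rw [Finset.disjoint_left]
    intro w hw hw'
    rw [mem_lenL] at hw hw'
    omega

lemma detEnc_tsum_one {𝒳 : Type} (f : 𝒳 → List Bool) (x : 𝒳) :
    ∑' w : List Bool, detEnc f x w = 1 := by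
  rw [tsum_eq_single (f x) (fun w hw => by simp [detEnc, hw])]
  simp [detEnc]

lemma detEnc_tsum_ite {𝒳 : Type} (f : 𝒳 → List Bool) (x : 𝒳) (c : ℝ≥0∞)
    (P : List Bool → Prop) [DecidablePred P] :
    ∑' w : List Bool, (if P w then c * detEnc f x w else 0)
      = if P (f x) then c else 0 := by
  rw [tsum_eq_single (f x) (fun w hw => by simp [detEnc, hw])]
  by_cases h : P (f x) <;> simp [detEnc, h]

/-- Greedy splitting lemma. -/
lemma split_lemma {𝒳 : Type} [DecidableEq 𝒳] (w : 𝒳 → ℝ≥0∞) (a : ℝ≥0∞) (B : Finset 𝒳) :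
    ∃ T J : Finset 𝒳, T ⊆ B ∧ J ⊆ B \ T ∧ J.card ≤ 1 ∧
      (∑ x ∈ T, w x) ≤ a ∧
      (∑ x ∈ B \ (T ∪ J), w x) ≤ (∑ x ∈ B, w x) - a ∧
      (J = ∅ ∨ a < (∑ x ∈ T, w x) + (∑ x ∈ J, w x)) := by
  classical
  induction B using Finset.induction with
  | empty => exact ⟨∅, ∅, by simp, by simp, by simp, by simp, by simp, Or.inl rfl⟩
  | insert _ _ hx =>
    rename_i x B ih
    obtain ⟨T, J, hTB, hJB, hJ1, hTa, hrest, hinv⟩ := ih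
    have hxT : x ∉ T := fun h => hx (hTB h)
    have hxJ : x ∉ J := fun h => hx ((Finset.mem_sdiff.mp (hJB h)).1)
    have hsum : (∑ y ∈ B, w y) ≤ ∑ y ∈ insert x B, w y := by
      rw [Finset.sum_insert hx]; exact le_add_self
    by_cases h1 : (∑ y ∈ T, w y) + w x ≤ a
    · refine ⟨insert x T, J, ?_, ?_, hJ1, ?_, ?_, ?_⟩
      · exact Finset.insert_subset_insert x hTB
      · intro j hj
        have := Finset.mem_sdiff.mp (hJB hj)
        rw [Finset.mem_sdiff]
        refine ⟨Finset.mem_insert_of_mem this.1, ?_⟩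
        intro hji
        rcases Finset.mem_insert.mp hji with rfl | hji
        · exact hxJ hj
        · exact this.2 hji
      · rw [Finset.sum_insert hxT, add_comm]; exact h1
      · have : insert x B \ (insert x T ∪ J) = B \ (T ∪ J) := by
          ext y
          simp only [Finset.mem_sdiff, Finset.mem_insert, Finset.mem_union]
          constructor
          · rintro ⟨rfl | hy, h2⟩
            · exact absurd (Or.inl (Or.inl rfl)) h2
            · exact ⟨hy, fun h => h2 (by tauto)⟩
          · rintro ⟨hy, h2⟩
            refine ⟨Or.inr hy, ?_⟩
            rintro ((rfl | h) | h)
            · exact hx hy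
            · exact h2 (Or.inl h)
            · exact h2 (Or.inr h)
        rw [this]
        exact le_trans hrest (tsub_le_tsub_right hsum a)
      · rcases hinv with h | h
        · exact Or.inl h
        · right
          refine lt_of_lt_of_le h ?_
          rw [Finset.sum_insert hxT]
          exact add_le_add_left le_add_self _
    · by_cases h2 : J = ∅
      · -- J := {x}
        refine ⟨T, {x}, hTB.trans (Finset.subset_insert x B), ?_, by simp, hTa, ?_, ?_⟩
        · intro j hj
          rw [Finset.mem_singleton] at hj
          subst hj
          exact Finset.mem_sdiff.mpr ⟨Finset.mem_insert_self _ _, hxT⟩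
        · have : insert x B \ (T ∪ {x}) = B \ (T ∪ J) := by
            subst h2
            ext y
            simp only [Finset.mem_sdiff, Finset.mem_insert, Finset.mem_union,
              Finset.mem_singleton, Finset.union_empty]
            constructor
            · rintro ⟨rfl | hy, hn⟩
              · exact absurd (Or.inr rfl) hn
              · exact ⟨hy, fun h => hn (Or.inl h)⟩
            · rintro ⟨hy, hn⟩
              exact ⟨Or.inr hy, by rintro (h | rfl); exacts [hn h, hx hy]⟩
          rw [this]
          exact le_trans hrest (tsub_le_tsub_right hsum a)
        · right
          rw [Finset.sum_singleton]
          exact lt_of_not_ge h1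
      · -- J stays, x goes to rest
        have hinv' := hinv.resolve_left h2
        have haB : a ≤ ∑ y ∈ B, w y := by
          refine le_trans hinv'.le ?_
          rw [← Finset.sum_union (Finset.disjoint_left.mpr (fun y hyT hyJ =>
            (Finset.mem_sdiff.mp (hJB hyJ)).2 hyT))]
          exact Finset.sum_le_sum_of_subset (Finset.union_subset hTB
            (hJB.trans Finset.sdiff_subset))
        refine ⟨T, J, hTB.trans (Finset.subset_insert x B), hJB.trans (Finset.sdiff_subset_sdiff
          (Finset.subset_insert x B) (le_refl T)), hJ1, hTa, ?_, Or.inr hinv'⟩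
        have hxTJ : x ∉ T ∪ J := by
          rw [Finset.mem_union]; rintro (h | h); exacts [hxT h, hxJ h]
        have hins : insert x B \ (T ∪ J) = insert x (B \ (T ∪ J)) := by
          ext y
          simp only [Finset.mem_sdiff, Finset.mem_insert, Finset.mem_union]
          constructor
          · rintro ⟨rfl | hy, hn⟩
            · exact Or.inl rfl
            · exact Or.inr ⟨hy, hn⟩
          · rintro (rfl | ⟨hy, hn⟩)
            · refine ⟨Or.inl rfl, ?_⟩
              rintro (h | h)
              exacts [hxT h, hxJ h]
            · exact ⟨Or.inr hy, hn⟩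
        rw [hins, Finset.sum_insert (by
          rw [Finset.mem_sdiff]; exact fun h => hx h.1), Finset.sum_insert hx]
        have h3 : (∑ y ∈ B \ (T ∪ J), w y) + a ≤ ∑ y ∈ B, w y := by
          calc (∑ y ∈ B \ (T ∪ J), w y) + a ≤ ((∑ y ∈ B, w y) - a) + a :=
                add_le_add_left hrest a
            _ = ∑ y ∈ B, w y := tsub_add_cancel_of_le haB
        refine ENNReal.le_sub_of_add_le_right hinv'.ne_top ?_
        calc (w x + ∑ y ∈ B \ (T ∪ J), w y) + a
            = w x + ((∑ y ∈ B \ (T ∪ J), w y) + a) := by ring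
          _ ≤ w x + ∑ y ∈ B, w y := add_le_add_right h3 _

lemma marginal_total {𝒳 𝒴 : Type} [Fintype 𝒳] [Fintype 𝒴]
    (pX : 𝒳 → ℝ≥0∞) (hpX : ∑ x, pX x = 1) (V : 𝒳 → 𝒴 → ℝ≥0∞) (hV : IsChannel V) :
    ∑ y, marginal pX V y = 1 := by
  unfold marginal
  rw [Finset.sum_comm]
  simp_rw [← Finset.mul_sum, hV _, mul_one]
  exact hpX

/-- Attainment of the smooth max entropy. -/
lemma smoothMaxEnt_attained {𝒴 : Type} [Fintype 𝒴] (P : 𝒴 → ℝ≥0∞) (δ : ℝ)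
    (hP : ENNReal.ofReal (1 - δ) ≤ ∑ y, P y) :
    ∃ W : Finset 𝒴, ENNReal.ofReal (1 - δ) ≤ (∑ y ∈ W, P y) ∧
      smoothMaxEnt P δ = Real.logb 2 (W.card) := by
  have hne : {r : ℝ | ∃ W : Finset 𝒴,
      ENNReal.ofReal (1 - δ) ≤ ∑ y ∈ W, P y ∧ r = Real.logb 2 (W.card)}.Nonempty :=
    ⟨Real.logb 2 ((Finset.univ : Finset 𝒴).card), ⟨Finset.univ, hP, rfl⟩⟩
  have hfin : {r : ℝ | ∃ W : Finset 𝒴,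
      ENNReal.ofReal (1 - δ) ≤ ∑ y ∈ W, P y ∧ r = Real.logb 2 (W.card)}.Finite := by
    apply Set.Finite.subset (Set.finite_range (fun W : Finset 𝒴 => Real.logb 2 (W.card)))
    rintro r ⟨W, _, rfl⟩
    exact ⟨W, rfl⟩
  obtain ⟨W, hW, hr⟩ := hne.csInf_mem hfin
  exact ⟨W, hW, hr⟩

/-- Attainment of `Gq`. -/
lemma Gq_attained {𝒳 𝒴 : Type} [Fintype 𝒳] [Fintype 𝒴]
    (pX : 𝒳 → ℝ≥0∞) (hpX : ∑ x, pX x = 1) (d : 𝒳 → 𝒴 → ℝ) (D ε δ : ℝ)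
    (hδ0 : 0 ≤ δ)
    (hG : Gq pX d D ε δ ≠ ⊤) :
    ∃ V : 𝒳 → 𝒴 → ℝ≥0∞, IsChannel V ∧ chExcess pX V d D ≤ ENNReal.ofReal ε ∧
      Gq pX d D ε δ = ENNReal.ofReal (smoothMaxEnt (marginal pX V) δ) := by
  classical
  set A : Set ℝ≥0∞ := {v | ∃ V : 𝒳 → 𝒴 → ℝ≥0∞, IsChannel V ∧
      chExcess pX V d D ≤ ENNReal.ofReal ε ∧
      v = ENNReal.ofReal (smoothMaxEnt (marginal pX V) δ)} with hA
  have hGA : Gq pX d D ε δ = sInf A := by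
    apply le_antisymm
    · apply le_sInf
      rintro v ⟨V, h1, h2, rfl⟩
      refine iInf_le_of_le V ?_
      rw [iInf_pos h1, iInf_pos h2]
    · refine le_iInf fun V => le_iInf fun h1 => le_iInf fun h2 => ?_
      exact sInf_le ⟨V, h1, h2, rfl⟩
  have hAne : A.Nonempty := by
    by_contra h
    rw [Set.not_nonempty_iff_eq_empty] at h
    rw [hGA, h, sInf_empty] at hG
    exact hG rfl
  have hAfin : A.Finite := by
    apply Set.Finite.subset (Set.finite_range
      (fun W : Finset 𝒴 => ENNReal.ofReal (Real.logb 2 (W.card))))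
    rintro v ⟨V, h1, h2, rfl⟩
    have hm : ENNReal.ofReal (1 - δ) ≤ ∑ y, marginal pX V y := by
      have : ∑ y, marginal pX V y = 1 := by
        unfold marginal
        rw [Finset.sum_comm]
        simp_rw [← Finset.mul_sum, h1 _, mul_one]
        exact hpX
      rw [this]
      exact ENNReal.ofReal_le_one.mpr (by linarith)
    obtain ⟨W, _, hr⟩ := smoothMaxEnt_attained (marginal pX V) δ hm
    exact ⟨W, by rw [hr]⟩
  have := hGA ▸ (Set.Nonempty.csInf_mem hAne hAfin)
  obtain ⟨V, h1, h2, hv⟩ := this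
  exact ⟨V, h1, h2, hv⟩

/-- Converse lemma. -/
lemma converse_lemma {𝒳 𝒴 : Type} [Fintype 𝒳] [Fintype 𝒴]
    (pX : 𝒳 → ℝ≥0∞) (hpX : ∑ x, pX x = 1) (d : 𝒳 → 𝒴 → ℝ)
    (D ε δ : ℝ) (hδ0 : 0 ≤ δ) (hδ1 : δ < 1) (n : ℕ)
    (f : 𝒳 → List Bool) (g : List Bool → 𝒴)
    (hcode : IsCode pX d D (n : ℝ) ε δ (detEnc f) g) :
    Gq pX d D ε δ ≤ ENNReal.ofReal (Real.logb 2 ((2 ^ (n+1) - 1 : ℕ))) := by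
  classical
  obtain ⟨-, hdist, hov⟩ := hcode
  -- collapse the tsums
  have hdist' : (∑ x, if D < d x (g (f x)) then pX x else 0) ≤ ENNReal.ofReal ε := by
    refine le_trans (le_of_eq ?_) hdist
    exact (Finset.sum_congr rfl fun x _ =>
      (detEnc_tsum_ite f x (pX x) (fun w => D < d x (g w))).symm)
  have hov' : (∑ x, if (n:ℝ) < ((f x).length : ℝ) then pX x else 0) ≤ ENNReal.ofReal δ := by
    refine le_trans (le_of_eq ?_) hov
    exact (Finset.sum_congr rfl fun x _ =>
      (detEnc_tsum_ite f x (pX x) (fun w => (n:ℝ) < (w.length : ℝ))).symm)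
  -- the deterministic channel
  set V : 𝒳 → 𝒴 → ℝ≥0∞ := fun x y => if y = g (f x) then 1 else 0 with hV
  have hchan : IsChannel V := by
    intro x
    simp [hV]
  have hexc : chExcess pX V d D ≤ ENNReal.ofReal ε := by
    refine le_trans (le_of_eq ?_) hdist'
    unfold chExcess
    refine Finset.sum_congr rfl fun x _ => ?_
    rw [show (∑ y, if D < d x y then pX x * V x y else 0)
        = ∑ y, (if y = g (f x) then (if D < d x y then pX x else 0) else 0) from
      Finset.sum_congr rfl fun y _ => by
        by_cases hy : y = g (f x) <;> by_cases hD' : D < d x y <;> simp [hV, hy, hD']]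
    rw [Finset.sum_ite_eq' Finset.univ (g (f x))
      (fun y => if D < d x y then pX x else 0)]
    simp
  -- the candidate witness set
  set W₀ : Finset 𝒴 := (strS n).image g with hW₀
  have hsum : ENNReal.ofReal (1 - δ) ≤ ∑ y ∈ W₀, marginal pX V y := by
    have h1 : ∑ y ∈ W₀, marginal pX V y
        = ∑ x, (if g (f x) ∈ W₀ then pX x else 0) := by
      unfold marginal
      rw [Finset.sum_comm]
      refine Finset.sum_congr rfl fun x _ => ?_
      rw [show (∑ y ∈ W₀, pX x * V x y)
          = ∑ y ∈ W₀, (if y = g (f x) then pX x else 0) from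
        Finset.sum_congr rfl fun y _ => by by_cases hy : y = g (f x) <;> simp [hV, hy]]
      exact Finset.sum_ite_eq' W₀ (g (f x)) (fun _ => pX x)
    have h2 : (∑ x, if ¬ ((n:ℝ) < ((f x).length : ℝ)) then pX x else 0)
        ≤ ∑ x, (if g (f x) ∈ W₀ then pX x else 0) := by
      refine Finset.sum_le_sum fun x _ => ?_
      by_cases hx : (n:ℝ) < ((f x).length : ℝ)
      · simp [hx]
      · have hlen : (f x).length ≤ n := by exact_mod_cast not_lt.mp hx
        have : g (f x) ∈ W₀ := Finset.mem_image_of_mem g (mem_strS.mpr hlen)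
        simp [hx, this]
    have h3 : (∑ x, if ¬ ((n:ℝ) < ((f x).length : ℝ)) then pX x else 0)
        + (∑ x, if (n:ℝ) < ((f x).length : ℝ) then pX x else 0) = 1 := by
      rw [← Finset.sum_add_distrib]
      rw [← hpX]
      refine Finset.sum_congr rfl fun x _ => ?_
      by_cases hx : (n:ℝ) < ((f x).length : ℝ) <;> simp [hx]
    have h4 : ENNReal.ofReal (1 - δ)
        ≤ (∑ x, if ¬ ((n:ℝ) < ((f x).length : ℝ)) then pX x else 0) := by
      rw [ENNReal.ofReal_sub 1 hδ0, ENNReal.ofReal_one]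
      refine le_trans (tsub_le_tsub_left hov' 1) ?_
      rw [← h3]
      rw [ENNReal.add_sub_cancel_right]
      · exact le_trans (Finset.sum_le_sum fun x _ => by
          by_cases hx : (n:ℝ) < ((f x).length : ℝ) <;> simp [hx]) (le_of_eq hpX) |>.trans_lt
          ENNReal.one_lt_top |>.ne
    rw [h1]
    exact le_trans h4 h2
  -- bound Gq
  have hGle : Gq pX d D ε δ ≤ ENNReal.ofReal (smoothMaxEnt (marginal pX V) δ) := by
    refine iInf_le_of_le V ?_
    rw [iInf_pos hchan, iInf_pos hexc]
  refine le_trans hGle (ENNReal.ofReal_le_ofReal ?_)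
  -- bound the smooth max entropy
  have hmem : Real.logb 2 (W₀.card) ∈ {r : ℝ | ∃ W : Finset 𝒴,
      ENNReal.ofReal (1 - δ) ≤ ∑ y ∈ W, marginal pX V y ∧ r = Real.logb 2 (W.card)} :=
    ⟨W₀, hsum, rfl⟩
  have hbdd : BddBelow {r : ℝ | ∃ W : Finset 𝒴,
      ENNReal.ofReal (1 - δ) ≤ ∑ y ∈ W, marginal pX V y ∧ r = Real.logb 2 (W.card)} := by
    refine ⟨0, ?_⟩
    rintro r ⟨W, hW, rfl⟩
    have hWne : W.Nonempty := by
      have hpos : 0 < ENNReal.ofReal (1 - δ) := ENNReal.ofReal_pos.mpr (by linarith)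
      rcases Finset.eq_empty_or_nonempty W with rfl | h
      · simp only [Finset.sum_empty] at hW
        exact absurd (lt_of_lt_of_le hpos hW) (by simp)
      · exact h
    have : (1:ℝ) ≤ W.card := by exact_mod_cast Finset.card_pos.mpr hWne
    exact Real.logb_nonneg one_lt_two this
  refine le_trans (csInf_le hbdd hmem) ?_
  -- card bound
  have hcard : W₀.card ≤ 2 ^ (n+1) - 1 := by
    calc W₀.card ≤ (strS n).card := Finset.card_image_le
      _ = 2 ^ (n+1) - 1 := card_strS n
  have hpos : (0:ℝ) < (W₀.card : ℝ) := by
    have : W₀.Nonempty := ⟨g [], Finset.mem_image_of_mem g (mem_strS.mpr (by simp))⟩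
    exact_mod_cast Finset.card_pos.mpr this
  exact Real.logb_le_logb_of_le (by norm_num) hpos (by exact_mod_cast hcard)

/-- Achievability. -/
lemma achieve_lemma {𝒳 𝒴 : Type} [Fintype 𝒳] [Fintype 𝒴] [Nonempty 𝒳] [Nonempty 𝒴]
    (pX : 𝒳 → ℝ≥0∞) (hpX : ∑ x, pX x = 1) (d : 𝒳 → 𝒴 → ℝ)
    (D ε δ : ℝ) (hδ0 : 0 ≤ δ) (hδ1 : δ < 1)
    (V : 𝒳 → 𝒴 → ℝ≥0∞) (hchan : IsChannel V)
    (hexc : chExcess pX V d D ≤ ENNReal.ofReal ε)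
    (Wf : Finset 𝒴) (hWsum : ENNReal.ofReal (1 - δ) ≤ ∑ y ∈ Wf, marginal pX V y)
    (N : ℕ) (hN : Wf.card + 1 ≤ (strS N).card) :
    ∃ (f : 𝒳 → List Bool) (g : List Bool → 𝒴),
      IsCode pX d D (N : ℝ) ε δ (detEnc f) g := by
  classical
  set K := Wf.card with hK
  -- short strings
  set ι : Fin (K+1) → List Bool :=
    fun i => ((strS N).equivFin.symm (Fin.castLE hN i) : List Bool) with hι
  have hι_mem : ∀ i, ι i ∈ strS N := fun i => ((strS N).equivFin.symm _).2
  have hι_inj : Function.Injective ι := by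
    intro i j h
    have h1 := Subtype.coe_injective h
    have h2 := (strS N).equivFin.symm.injective h1
    have h3 := congrArg Fin.val h2
    exact Fin.ext h3
  set eW : Fin K ≃ {y // y ∈ Wf} := Wf.equivFin.symm with heW
  set e𝒴 : 𝒴 ≃ Fin (Fintype.card 𝒴) := Fintype.equivFin 𝒴 with he𝒴
  set long : 𝒴 → List Bool :=
    fun y => List.replicate (N + 1 + (e𝒴 y : ℕ)) true with hlong
  have hlong_len : ∀ y, N < (long y).length := by
    intro y; simp only [hlong, List.length_replicate]; omega
  have hlong_inj : Function.Injective long := by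
    intro y y' h
    have := congrArg List.length h
    simp only [hlong, List.length_replicate] at this
    exact e𝒴.injective (Fin.ext (by omega))
  have hlong_not_short : ∀ (i : Fin (K+1)) y, ι i ≠ long y := by
    intro i y h
    have h1 : (ι i).length ≤ N := mem_strS.mp (hι_mem i)
    have h2 := hlong_len y
    rw [h] at h1; omega
  -- the partition of 𝒳
  set unc : Finset 𝒳 := Finset.univ.filter (fun x => ¬ ∃ y, d x y ≤ D) with hunc
  set badF : Finset 𝒳 := Finset.univ.filter
    (fun x => (∃ y, d x y ≤ D) ∧ ¬ ∃ y ∈ Wf, d x y ≤ D) with hbadF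
  set U := ∑ x ∈ unc, pX x with hUdef
  -- per-point expansion
  have hpoint : ∀ x, pX x = ∑ y, pX x * V x y := by
    intro x; rw [← Finset.mul_sum, hchan x, mul_one]
  have hUex : U = ∑ x ∈ unc, ∑ y, (if D < d x y then pX x * V x y else 0) := by
    refine Finset.sum_congr rfl fun x hx => ?_
    rw [hunc, Finset.mem_filter] at hx
    conv_lhs => rw [hpoint x]
    refine Finset.sum_congr rfl fun y _ => ?_
    rw [if_pos]
    by_contra h
    exact hx.2 ⟨y, le_of_not_gt h⟩
  have hU : U ≤ ENNReal.ofReal ε := by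
    rw [hUex]
    refine le_trans (Finset.sum_le_sum_of_subset (Finset.subset_univ unc)) hexc
  -- the δ-budget
  have hδpart : (∑ x, ∑ y, (if y ∈ Wf then 0 else pX x * V x y)) ≤ ENNReal.ofReal δ := by
    have h5 : (∑ x, ∑ y, (if y ∈ Wf then 0 else pX x * V x y))
        = ∑ y, (if y ∈ Wf then 0 else marginal pX V y) := by
      rw [Finset.sum_comm]
      refine Finset.sum_congr rfl fun y _ => ?_
      by_cases hy : y ∈ Wf <;> simp [hy, marginal]
    have h6 : (∑ y ∈ Wf, marginal pX V y) + (∑ y, (if y ∈ Wf then 0 else marginal pX V y))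
        = 1 := by
      rw [← marginal_total pX hpX V hchan]
      have : (∑ y ∈ Wf, marginal pX V y)
          = ∑ y, (if y ∈ Wf then marginal pX V y else 0) := by
        rw [Finset.sum_ite_mem, Finset.univ_inter]
      rw [this, ← Finset.sum_add_distrib]
      refine Finset.sum_congr rfl fun y _ => ?_
      by_cases hy : y ∈ Wf <;> simp [hy]
    rw [h5]
    have hS1 : (∑ y ∈ Wf, marginal pX V y) ≤ 1 := le_of_le_of_eq le_self_add h6
    have : (∑ y, (if y ∈ Wf then 0 else marginal pX V y))
        ≤ 1 - ∑ y ∈ Wf, marginal pX V y := by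
      refine ENNReal.le_sub_of_add_le_left (hS1.trans_lt ENNReal.one_lt_top).ne ?_
      exact le_of_eq h6
    refine le_trans this ?_
    refine le_trans (tsub_le_tsub_left hWsum 1) ?_
    rw [ENNReal.ofReal_sub 1 hδ0, ENNReal.ofReal_one,
      ENNReal.sub_sub_cancel ENNReal.one_ne_top (ENNReal.ofReal_le_one.mpr (by linarith))]
  -- the key budget inequality
  have hUB : U + (∑ x ∈ badF, pX x) ≤ ENNReal.ofReal ε + ENNReal.ofReal δ := by
    have hBle : (∑ x ∈ badF, pX x)
        ≤ (∑ x ∈ badF, ∑ y, (if D < d x y then pX x * V x y else 0))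
          + (∑ x ∈ badF, ∑ y, (if y ∈ Wf then 0 else pX x * V x y)) := by
      rw [← Finset.sum_add_distrib]
      refine Finset.sum_le_sum fun x hx => ?_
      rw [hbadF, Finset.mem_filter] at hx
      conv_lhs => rw [hpoint x]
      rw [← Finset.sum_add_distrib]
      refine Finset.sum_le_sum fun y _ => ?_
      by_cases hD' : D < d x y
      · rw [if_pos hD']; exact le_self_add
      · rw [if_neg hD']
        have hy : y ∉ Wf := by
          intro hyW
          exact hx.2.2 ⟨y, hyW, le_of_not_gt hD'⟩
        rw [if_neg hy]
        exact le_add_self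
    have hdisj : Disjoint unc badF := by
      rw [Finset.disjoint_left]
      intro x hx hx'
      rw [hunc, Finset.mem_filter] at hx
      rw [hbadF, Finset.mem_filter] at hx'
      exact hx.2 hx'.2.1
    calc U + (∑ x ∈ badF, pX x)
        ≤ (∑ x ∈ unc, ∑ y, (if D < d x y then pX x * V x y else 0))
          + ((∑ x ∈ badF, ∑ y, (if D < d x y then pX x * V x y else 0))
            + (∑ x ∈ badF, ∑ y, (if y ∈ Wf then 0 else pX x * V x y))) := by
          rw [← hUex]
          exact add_le_add_right hBle U
      _ = (∑ x ∈ unc ∪ badF, ∑ y, (if D < d x y then pX x * V x y else 0))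
          + (∑ x ∈ badF, ∑ y, (if y ∈ Wf then 0 else pX x * V x y)) := by
          rw [Finset.sum_union hdisj, add_assoc]
      _ ≤ chExcess pX V d D + (∑ x, ∑ y, (if y ∈ Wf then 0 else pX x * V x y)) := by
          refine add_le_add ?_ (Finset.sum_le_sum_of_subset (Finset.subset_univ badF))
          exact Finset.sum_le_sum_of_subset (Finset.subset_univ _)
      _ ≤ ENNReal.ofReal ε + ENNReal.ofReal δ := add_le_add hexc hδpart
  -- split the bad set
  obtain ⟨T, J, hTB, hJBT, hJ1, hTa, hrest, -⟩ :=
    split_lemma pX (ENNReal.ofReal ε - U) badF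
  set Rest := badF \ (T ∪ J) with hRest
  have hTbound : U + (∑ x ∈ T, pX x) ≤ ENNReal.ofReal ε := by
    calc U + (∑ x ∈ T, pX x) ≤ U + (ENNReal.ofReal ε - U) := add_le_add_right hTa U
      _ = ENNReal.ofReal ε := add_tsub_cancel_of_le hU
  have hRbound : (∑ x ∈ Rest, pX x) ≤ ENNReal.ofReal δ := by
    refine le_trans hrest ?_
    rw [tsub_le_iff_right]
    have h7 : (∑ x ∈ badF, pX x) ≤ (ENNReal.ofReal ε + ENNReal.ofReal δ) - U :=
      ENNReal.le_sub_of_add_le_left (hU.trans_lt ENNReal.ofReal_lt_top).ne hUB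
    refine le_trans h7 (le_of_eq ?_)
    rw [add_comm (ENNReal.ofReal δ) (ENNReal.ofReal ε - U),
      ENNReal.sub_add_eq_add_sub hU (hU.trans_lt ENNReal.ofReal_lt_top).ne]
  -- the special element j and codeword yj
  have hJcov : ∀ x ∈ J, ∃ y, d x y ≤ D := by
    intro x hx
    have hb := (Finset.mem_sdiff.mp (hJBT hx)).1
    rw [hbadF, Finset.mem_filter] at hb
    exact hb.2.1
  set j : 𝒳 := if h : J.Nonempty then h.choose else Classical.arbitrary 𝒳 with hj
  have hxJ_eq : ∀ x ∈ J, x = j := by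
    intro x hx
    have hne : J.Nonempty := ⟨x, hx⟩
    rw [hj, dif_pos hne]
    exact Finset.card_le_one.mp hJ1 x hx hne.choose hne.choose_spec
  set yj : 𝒴 := if h : ∃ y, d j y ≤ D then h.choose else Classical.arbitrary 𝒴 with hyj
  have hyj_d : J.Nonempty → d j yj ≤ D := by
    intro hne
    have hjJ : j ∈ J := by rw [hj, dif_pos hne]; exact hne.choose_spec
    have hcov : ∃ y, d j y ≤ D := hJcov j hjJ
    rw [hyj, dif_pos hcov]
    exact hcov.choose_spec
  -- encoder and decoder
  set f : 𝒳 → List Bool := fun x =>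
    if hg : ∃ y ∈ Wf, d x y ≤ D then
      ι (Fin.castSucc (eW.symm ⟨hg.choose, hg.choose_spec.1⟩))
    else if x ∈ J then ι (Fin.last K)
    else if x ∈ Rest then (if hc : ∃ y, d x y ≤ D then long hc.choose else ι 0)
    else ι 0 with hf
  set g : List Bool → 𝒴 := fun w =>
    if h : ∃ i : Fin (K+1), ι i = w then
      (if hi : ((h.choose : Fin (K+1)) : ℕ) < K
        then ((eW ⟨((h.choose : Fin (K+1)) : ℕ), hi⟩ : {y // y ∈ Wf}) : 𝒴) else yj)
    else if h2 : ∃ y, long y = w then h2.choose else Classical.arbitrary 𝒴 with hgdef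
  have hg_short : ∀ (i : Fin (K+1)), g (ι i) =
      (if hi : (i : ℕ) < K then ((eW ⟨(i:ℕ), hi⟩ : {y // y ∈ Wf}) : 𝒴) else yj) := by
    intro i
    have hex : ∃ i' : Fin (K+1), ι i' = ι i := ⟨i, rfl⟩
    simp only [hgdef]
    rw [dif_pos hex]
    have hchoose : hex.choose = i := hι_inj hex.choose_spec
    simp only [hchoose]
  have hg_long : ∀ y, g (long y) = y := by
    intro y
    have hnex : ¬ ∃ i : Fin (K+1), ι i = long y := by
      rintro ⟨i, hi⟩; exact hlong_not_short i y hi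
    have hex2 : ∃ y', long y' = long y := ⟨y, rfl⟩
    simp only [hgdef]
    rw [dif_neg hnex, dif_pos hex2]
    exact hlong_inj hex2.choose_spec
  -- pointwise distortion correctness
  have hdisjUB : Disjoint unc badF := by
    rw [Finset.disjoint_left]
    intro x hx hx'
    rw [hunc, Finset.mem_filter] at hx
    rw [hbadF, Finset.mem_filter] at hx'
    exact hx.2 hx'.2.1
  have hdist : ∀ x, x ∉ unc → x ∉ T → ¬ (D < d x (g (f x))) := by
    intro x hxu hxT
    rw [not_lt]
    by_cases hgood : ∃ y ∈ Wf, d x y ≤ D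
    · simp only [hf]
      rw [dif_pos hgood, hg_short]
      have hlt : ((Fin.castSucc (eW.symm ⟨hgood.choose, hgood.choose_spec.1⟩)) : ℕ) < K := by
        simpa using (eW.symm ⟨hgood.choose, hgood.choose_spec.1⟩).isLt
      rw [dif_pos hlt]
      have heq : (⟨((Fin.castSucc (eW.symm ⟨hgood.choose, hgood.choose_spec.1⟩)) : ℕ), hlt⟩ : Fin K)
          = eW.symm ⟨hgood.choose, hgood.choose_spec.1⟩ := Fin.ext (by simp)
      rw [heq, Equiv.apply_symm_apply]
      exact hgood.choose_spec.2
    · have hcov : ∃ y, d x y ≤ D := by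
        by_contra h
        exact hxu (by rw [hunc, Finset.mem_filter]; exact ⟨Finset.mem_univ x, h⟩)
      have hbadx : x ∈ badF := by
        rw [hbadF, Finset.mem_filter]; exact ⟨Finset.mem_univ x, hcov, hgood⟩
      by_cases hxJ : x ∈ J
      · simp only [hf]
        rw [dif_neg hgood, if_pos hxJ, hg_short]
        rw [dif_neg (by simp)]
        have hxj := hxJ_eq x hxJ
        rw [hxj]
        exact hyj_d ⟨x, hxJ⟩
      · have hxRest : x ∈ Rest := by
          rw [hRest, Finset.mem_sdiff]
          refine ⟨hbadx, ?_⟩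
          rw [Finset.mem_union]; rintro (h|h); exacts [hxT h, hxJ h]
        simp only [hf]
        rw [dif_neg hgood, if_neg hxJ, if_pos hxRest, dif_pos hcov, hg_long]
        exact hcov.choose_spec
  -- pointwise overflow correctness
  have hovf : ∀ x, x ∉ Rest → (f x).length ≤ N := by
    intro x hxR
    simp only [hf]
    by_cases hgood : ∃ y ∈ Wf, d x y ≤ D
    · rw [dif_pos hgood]; exact mem_strS.mp (hι_mem _)
    · rw [dif_neg hgood]
      by_cases hxJ : x ∈ J
      · rw [if_pos hxJ]; exact mem_strS.mp (hι_mem _)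
      · rw [if_neg hxJ, if_neg hxR]; exact mem_strS.mp (hι_mem _)
  -- assemble
  refine ⟨f, g, fun x => detEnc_tsum_one f x, ?_, ?_⟩
  · have hcollapse : (∑ x, ∑' w : List Bool, (if D < d x (g w) then pX x * detEnc f x w else 0))
        = ∑ x, (if D < d x (g (f x)) then pX x else 0) :=
      Finset.sum_congr rfl fun x _ => detEnc_tsum_ite f x (pX x) _
    rw [hcollapse]
    have hle : (∑ x, (if D < d x (g (f x)) then pX x else 0))
        ≤ ∑ x, (if x ∈ unc ∪ T then pX x else 0) := by
      refine Finset.sum_le_sum fun x _ => ?_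
      by_cases hx : x ∈ unc ∪ T
      · rw [if_pos hx]
        split_ifs <;> simp
      · rw [Finset.mem_union] at hx
        push_neg at hx
        rw [if_neg (hdist x hx.1 hx.2)]
        exact zero_le
    refine le_trans hle ?_
    rw [Finset.sum_ite_mem, Finset.univ_inter,
      Finset.sum_union (Finset.disjoint_of_subset_right hTB hdisjUB)]
    exact hTbound
  · have hcollapse : (∑ x, ∑' w : List Bool,
        (if (N:ℝ) < (w.length : ℝ) then pX x * detEnc f x w else 0))
        = ∑ x, (if (N:ℝ) < ((f x).length : ℝ) then pX x else 0) :=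
      Finset.sum_congr rfl fun x _ => detEnc_tsum_ite f x (pX x) _
    rw [hcollapse]
    have hle : (∑ x, (if (N:ℝ) < ((f x).length : ℝ) then pX x else 0))
        ≤ ∑ x, (if x ∈ Rest then pX x else 0) := by
      refine Finset.sum_le_sum fun x _ => ?_
      by_cases hx : x ∈ Rest
      · rw [if_pos hx]
        split_ifs <;> simp
      · have := hovf x hx
        rw [if_neg (by exact_mod_cast not_lt.mpr (by exact_mod_cast this))]
        exact zero_le
    refine le_trans hle ?_
    rw [Finset.sum_ite_mem, Finset.univ_inter]
    exact hRbound

/-- Two-sided bound on the optimal rate `R̃(D,ε,δ)` for deterministic codes: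
`G^δ_{D,ε}(X) - 1 < R̃(D,ε,δ) ≤ ⌊G^δ_{D,ε}(X) + (2 log₂ e)/2^{G^δ_{D,ε}(X)}⌋`. -/
theorem stmt4 {𝒳 𝒴 : Type} [Fintype 𝒳] [Fintype 𝒴] [Nonempty 𝒳] [Nonempty 𝒴]
    (pX : 𝒳 → ℝ≥0∞) (hpX : ∑ x, pX x = 1)
    (d : 𝒳 → 𝒴 → ℝ) (hd : ∀ x y, 0 ≤ d x y)
    (D ε δ : ℝ) (hD : 0 ≤ D) (hε : 0 ≤ ε ∧ ε < 1) (hδ : 0 ≤ δ ∧ δ < 1)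
    (hG : Gq pX d D ε δ ≠ ⊤) :
    (Gq pX d D ε δ).toReal - 1 <
        sInf {R : ℝ | 0 ≤ R ∧ ∃ (f : 𝒳 → List Bool) (g : List Bool → 𝒴),
          IsCode pX d D R ε δ (detEnc f) g} ∧
      sInf {R : ℝ | 0 ≤ R ∧ ∃ (f : 𝒳 → List Bool) (g : List Bool → 𝒴),
          IsCode pX d D R ε δ (detEnc f) g}
        ≤ ((⌊(Gq pX d D ε δ).toReal +
            2 * Real.logb 2 (Real.exp 1) / (2 : ℝ) ^ (Gq pX d D ε δ).toReal⌋ : ℤ) : ℝ) := by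
  classical
  obtain ⟨V, hchan, hexc, hGeq⟩ := Gq_attained pX hpX d D ε δ hδ.1 hG
  have hmargsum : ENNReal.ofReal (1 - δ) ≤ ∑ y, marginal pX V y := by
    rw [marginal_total pX hpX V hchan]
    exact ENNReal.ofReal_le_one.mpr (by linarith [hδ.1])
  obtain ⟨Wf, hWsum, hsm⟩ := smoothMaxEnt_attained (marginal pX V) δ hmargsum
  set K := Wf.card with hKdef
  have hK1 : 1 ≤ K := by
    by_contra h
    have : K = 0 := by omega
    have hWe : Wf = ∅ := Finset.card_eq_zero.mp this
    rw [hWe, Finset.sum_empty] at hWsum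
    have hpos : 0 < ENNReal.ofReal (1 - δ) := ENNReal.ofReal_pos.mpr (by linarith [hδ.2])
    exact absurd (lt_of_lt_of_le hpos hWsum) (by simp)
  have hKpos : (0:ℝ) < (K:ℝ) := by exact_mod_cast hK1
  have hlogK0 : 0 ≤ Real.logb 2 (K:ℝ) := Real.logb_nonneg one_lt_two (by exact_mod_cast hK1)
  have hGreal : (Gq pX d D ε δ).toReal = Real.logb 2 (K:ℝ) := by
    rw [hGeq, hsm, ENNReal.toReal_ofReal hlogK0]
  set a : ℝ := (Gq pX d D ε δ).toReal +
      2 * Real.logb 2 (Real.exp 1) / (2 : ℝ) ^ (Gq pX d D ε δ).toReal with ha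
  set N := ⌊a⌋₊ with hN
  -- arithmetic: 2^(N+1) > K + 2
  have hexp1 : (1:ℝ) < Real.exp 1 := by
    have := Real.add_one_le_exp 1
    linarith
  have hapos : 0 ≤ a := by
    have h1 : 0 < Real.logb 2 (Real.exp 1) := Real.logb_pos one_lt_two hexp1
    have h2 : (0:ℝ) < (2:ℝ) ^ (Gq pX d D ε δ).toReal := Real.rpow_pos_of_pos two_pos _
    rw [ha, hGreal]
    positivity
  have h2G : (2:ℝ) ^ ((Gq pX d D ε δ).toReal) = (K:ℝ) := by
    rw [hGreal]
    exact Real.rpow_logb two_pos (by norm_num) hKpos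
  have hcardN : K + 1 ≤ (strS N).card := by
    have key : (K:ℝ) + 2 < (2:ℝ) ^ ((N:ℝ) + 1) := by
      have haN : a < (N:ℝ) + 1 := by rw [hN]; exact Nat.lt_floor_add_one a
      have h2a : (2:ℝ) ^ a = (K:ℝ) * Real.exp (2 / (K:ℝ)) := by
        rw [ha, h2G, hGreal, Real.rpow_add two_pos,
          Real.rpow_logb two_pos (by norm_num) hKpos]
        congr 1
        rw [show 2 * Real.logb 2 (Real.exp 1) / (K:ℝ)
            = Real.logb 2 (Real.exp 1) * (2 / (K:ℝ)) from by ring,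
          Real.rpow_mul (by norm_num), Real.rpow_logb two_pos (by norm_num) (Real.exp_pos 1),
          Real.exp_one_rpow]
      have hKe : (K:ℝ) + 2 ≤ (K:ℝ) * Real.exp (2 / (K:ℝ)) := by
        have h3 : 2 / (K:ℝ) + 1 ≤ Real.exp (2 / (K:ℝ)) := Real.add_one_le_exp _
        have h4 : (K:ℝ) * (2 / (K:ℝ) + 1) ≤ (K:ℝ) * Real.exp (2 / (K:ℝ)) :=
          mul_le_mul_of_nonneg_left h3 (le_of_lt hKpos)
        have h5 : (K:ℝ) * (2 / (K:ℝ) + 1) = (K:ℝ) + 2 := by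
          field_simp
          ring
        linarith
      calc (K:ℝ) + 2 ≤ (2:ℝ) ^ a := by rw [h2a]; exact hKe
        _ < (2:ℝ) ^ ((N:ℝ) + 1) := by
            exact Real.rpow_lt_rpow_left_iff one_lt_two |>.mpr haN
    have key2 : K + 2 < 2 ^ (N + 1) := by
      have hcast : (2:ℝ) ^ ((N:ℝ) + 1) = ((2 ^ (N+1) : ℕ) : ℝ) := by
        rw [show ((N:ℝ) + 1) = ((N + 1 : ℕ) : ℝ) from by push_cast; ring,
          Real.rpow_natCast]
        push_cast
        ring
      rw [hcast] at key
      exact_mod_cast key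
    rw [card_strS]
    omega
  obtain ⟨f0, g0, hcode0⟩ := achieve_lemma pX hpX d D ε δ hδ.1 hδ.2 V hchan hexc Wf hWsum N hcardN
  set S := {R : ℝ | 0 ≤ R ∧ ∃ (f : 𝒳 → List Bool) (g : List Bool → 𝒴),
      IsCode pX d D R ε δ (detEnc f) g} with hS
  have hNS : (N:ℝ) ∈ S := ⟨Nat.cast_nonneg N, f0, g0, hcode0⟩
  have hfloor : ∀ R ∈ S, ((⌊R⌋₊ : ℕ) : ℝ) ∈ S := by
    rintro R ⟨hR0, f, g, h1, h2, h3⟩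
    refine ⟨Nat.cast_nonneg _, f, g, h1, h2, ?_⟩
    refine le_trans (le_of_eq ?_) h3
    refine Finset.sum_congr rfl fun x _ => tsum_congr fun w => ?_
    refine if_congr ?_ rfl rfl
    rw [show ((⌊R⌋₊ : ℕ) : ℝ) < (w.length : ℝ) ↔ ⌊R⌋₊ < w.length from by exact_mod_cast Iff.rfl,
      Nat.floor_lt hR0]
  have hSnat : ∃ k : ℕ, ((k:ℕ):ℝ) ∈ S := ⟨N, hNS⟩
  set n₀ := Nat.find hSnat with hn₀
  have hn₀S : ((n₀:ℕ):ℝ) ∈ S := Nat.find_spec hSnat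
  have hbdd : BddBelow S := ⟨0, fun R hR => hR.1⟩
  have hlow : ∀ R ∈ S, ((n₀:ℕ) : ℝ) ≤ R := by
    intro R hR
    have h2 : n₀ ≤ ⌊R⌋₊ := Nat.find_min' hSnat (hfloor R hR)
    calc ((n₀:ℕ):ℝ) ≤ ((⌊R⌋₊:ℕ):ℝ) := by exact_mod_cast h2
      _ ≤ R := Nat.floor_le hR.1
  have hsinf : sInf S = ((n₀:ℕ):ℝ) :=
    le_antisymm (csInf_le hbdd hn₀S) (le_csInf ⟨_, hNS⟩ hlow)
  constructor
  · rw [hsinf]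
    obtain ⟨-, f1, g1, hcode1⟩ := hn₀S
    have hconv := converse_lemma pX hpX d D ε δ hδ.1 hδ.2 n₀ f1 g1 hcode1
    have hpow1 : 1 ≤ 2 ^ (n₀+1) - 1 := by
      have : 2 ≤ 2 ^ (n₀+1) := by
        calc 2 = 2^1 := by norm_num
          _ ≤ 2 ^ (n₀+1) := Nat.pow_le_pow_right (by norm_num) (by omega)
      omega
    have hlog0 : 0 ≤ Real.logb 2 ((2 ^ (n₀+1) - 1 : ℕ) : ℝ) :=
      Real.logb_nonneg one_lt_two (by exact_mod_cast hpow1)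
    have hto := ENNReal.toReal_mono ENNReal.ofReal_ne_top hconv
    rw [ENNReal.toReal_ofReal hlog0] at hto
    have hlt : Real.logb 2 ((2 ^ (n₀+1) - 1 : ℕ) : ℝ) < (n₀:ℝ) + 1 := by
      have hlt2 : ((2 ^ (n₀+1) - 1 : ℕ) : ℝ) < (2:ℝ) ^ (n₀+1) := by
        have : ((2 ^ (n₀+1) - 1 : ℕ) : ℝ) = (2:ℝ) ^ (n₀+1) - 1 := by
          have h2 : 1 ≤ 2 ^ (n₀+1) := Nat.one_le_two_pow
          push_cast [Nat.cast_sub h2]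
          ring
        rw [this]
        linarith
      have hpos2 : (0:ℝ) < ((2 ^ (n₀+1) - 1 : ℕ) : ℝ) := by exact_mod_cast hpow1
      calc Real.logb 2 ((2 ^ (n₀+1) - 1 : ℕ) : ℝ)
          < Real.logb 2 ((2:ℝ) ^ (n₀+1)) := by
            exact Real.logb_lt_logb one_lt_two hpos2 hlt2
        _ = (n₀:ℝ) + 1 := by
            rw [Real.logb_pow, Real.logb_self_eq_one one_lt_two]
            push_cast
            ring
    linarith
  · rw [hsinf]
    have h1 : ((N:ℕ) : ℤ) = ⌊a⌋ := by
      rw [hN, ← Int.floor_toNat a]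
      exact Int.toNat_of_nonneg (Int.floor_nonneg.mpr hapos)
    have hNfloor : ((⌊a⌋ : ℤ) : ℝ) = ((N:ℕ):ℝ) := by exact_mod_cast congrArg (fun z : ℤ => (z:ℝ)) h1.symm
    rw [hNfloor]
    exact_mod_cast Nat.find_min' hSnat hNS

end
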